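/- For a finite graph G with n vertices and maximum degree at most d, the bubble width, path width, and tree width of G satisfy: TW(G) ≤ PW(G) ≤ 2·BW(G) ≤ 2d·PW(G) ≤ O(d·log n)·TW(G). In particular, for bounded-degree graphs the three parameters are equal up to a factor of O(log n). -/

import Mathlib

/-- Number of edges of `G` with exactly one endpoint in `S`
(counted as ordered pairs with the first coordinate in `S`). -/
noncomputable def cutSize {V : Type*} (G : SimpleGraph V) (S : Set V) : ℕ :=
  {p : V × V | G.Adj p.1 p.2 ∧ p.1 ∈ S ∧ p.2 ∉ S}.ncard

/-- The prefix `{b 0, …, b i}` of an ordering of the vertices. -/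
def prefixSet {V : Type*} [Fintype V] (b : Fin (Fintype.card V) ≃ V)
    (i : Fin (Fintype.card V)) : Set V :=
  {v | ∃ j, j ≤ i ∧ b j = v}

/-- The width of a bubbling (vertex ordering): max size of a prefix cut. -/
noncomputable def ordWidth {V : Type*} [Fintype V] (G : SimpleGraph V)
    (b : Fin (Fintype.card V) ≃ V) : ℕ :=
  Finset.univ.sup fun i => cutSize G (prefixSet b i)

/-- The bubble width of a finite graph. -/
noncomputable def bubbleWidth {V : Type*} [Fintype V] (G : SimpleGraph V) : ℕ :=
  sInf (Set.range (ordWidth G))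


/-- A path decomposition of `G`. -/
structure PathDecomp {V : Type*} (G : SimpleGraph V) where
  m : ℕ
  bag : Fin m → Set V
  cover : ∀ ⦃u v⦄, G.Adj u v → ∃ i, u ∈ bag i ∧ v ∈ bag i
  interval : ∀ v (i j k : Fin m), i ≤ j → j ≤ k → v ∈ bag i → v ∈ bag k → v ∈ bag j

/-- The width of a path decomposition: the maximal bag size. -/
noncomputable def PathDecomp.width {V : Type*} {G : SimpleGraph V} (D : PathDecomp G) : ℕ :=
  Finset.univ.sup fun i => (D.bag i).ncard

/-- The path width of a finite graph. -/
noncomputable def pathWidth {V : Type*} (G : SimpleGraph V) : ℕ :=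
  sInf (Set.range (PathDecomp.width (G := G)))


/-- A tree decomposition of `G`. -/
structure TreeDecomp {V : Type*} (G : SimpleGraph V) where
  m : ℕ
  T : SimpleGraph (Fin m)
  isTree : T.IsTree
  bag : Fin m → Set V
  cover : ∀ ⦃u v⦄, G.Adj u v → ∃ i, u ∈ bag i ∧ v ∈ bag i
  pathCond : ∀ v (i j : Fin m) (p : T.Walk i j), p.IsPath →
    v ∈ bag i → v ∈ bag j → ∀ k ∈ p.support, v ∈ bag k

noncomputable def TreeDecomp.width {V : Type*} {G : SimpleGraph V} (D : TreeDecomp G) : ℕ :=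
  Finset.univ.sup fun i => (D.bag i).ncard

/-- The tree width of a finite graph. -/
noncomputable def treeWidth {V : Type*} (G : SimpleGraph V) : ℕ :=
  sInf (Set.range (TreeDecomp.width (G := G)))

section Helpers
open SimpleGraph


/-- any walk in the path graph from `a` to `b` with `a ≤ v < b` uses edge (v, v+1) -/
lemma pathGraph_walk_edge {n : ℕ} {a b : Fin n} (p : (pathGraph n).Walk a b)
    (v w : Fin n) (hvw : (v : ℕ) + 1 = (w : ℕ)) (hav : (a : ℕ) ≤ v) (hwb : (w : ℕ) ≤ b) :
    s(v, w) ∈ p.edges := by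
  induction p with
  | nil => omega
  | @cons x y c h q ih =>
    rcases pathGraph_adj.mp h with h1 | h1
    · by_cases hxv : (x : ℕ) = (v : ℕ)
      · have : x = v := Fin.ext hxv
        have : y = w := Fin.ext (by omega)
        subst this; subst ‹x = v›
        simp [SimpleGraph.Walk.edges_cons]
      · have : (y : ℕ) ≤ (v : ℕ) := by omega
        simp [SimpleGraph.Walk.edges_cons, ih this hwb]
    · have : (y : ℕ) ≤ (v : ℕ) := by omega
      simp [SimpleGraph.Walk.edges_cons, ih this hwb]

lemma pathGraph_isAcyclic (n : ℕ) : (pathGraph n).IsAcyclic := by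
  rw [isAcyclic_iff_forall_adj_isBridge]
  intro v w hvw
  rw [isBridge_iff_adj_and_forall_walk_mem_edges]
  refine fun p => ?_
  rcases pathGraph_adj.mp hvw with h1 | h1
  · exact pathGraph_walk_edge p v w h1 le_rfl le_rfl
  · have := pathGraph_walk_edge p.reverse w v h1 le_rfl le_rfl
    rw [SimpleGraph.Walk.edges_reverse, List.mem_reverse] at this
    rwa [Sym2.eq_swap] at this

lemma pathGraph_isTree (n : ℕ) (hn : 0 < n) : (pathGraph n).IsTree := by
  match n, hn with
  | (k+1), _ => exact ⟨pathGraph_connected k, pathGraph_isAcyclic _⟩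

/-- monotone path in pathGraph with controlled support -/
lemma pathGraph_exists_path {n : ℕ} (a b : Fin n) (hab : a ≤ b) :
    ∃ p : (pathGraph n).Walk a b, p.IsPath ∧
      ∀ k ∈ p.support, a ≤ k ∧ k ≤ b := by
  obtain ⟨d, hd⟩ : ∃ d, (b : ℕ) = (a : ℕ) + d := ⟨b - a, by omega⟩
  clear hab
  induction d generalizing a with
  | zero =>
    have : a = b := Fin.ext (by omega)
    subst this
    exact ⟨SimpleGraph.Walk.nil, by simp, by simp⟩
  | succ d ih =>
    have ha1 : (a : ℕ) + 1 < n := by have := b.isLt; omega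
    set a' : Fin n := ⟨(a : ℕ) + 1, ha1⟩ with ha'
    have hadj : (pathGraph n).Adj a a' := pathGraph_adj.mpr (Or.inl rfl)
    obtain ⟨q, hq, hsup⟩ := ih a' (show (b:ℕ) = (a:ℕ)+1+d by omega)
    refine ⟨SimpleGraph.Walk.cons hadj q, ?_, ?_⟩
    · rw [SimpleGraph.Walk.cons_isPath_iff]
      refine ⟨hq, fun hmem => ?_⟩
      exact absurd (hsup a hmem).1 (by simp [ha', Fin.le_def])
    · intro k hk
      rw [SimpleGraph.Walk.support_cons] at hk
      rcases List.mem_cons.mp hk with rfl | hk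
      · exact ⟨le_rfl, by rw [Fin.le_def]; omega⟩
      · have := hsup k hk
        constructor
        · refine le_trans ?_ this.1
          rw [Fin.le_def]; simp [ha']
        · exact this.2

lemma pathGraph_path_support {n : ℕ} {a b : Fin n} (p : (pathGraph n).Walk a b)
    (hp : p.IsPath) : ∀ k ∈ p.support, min a b ≤ k ∧ k ≤ max a b := by
  rcases le_total a b with hab | hab
  · obtain ⟨q, hq, hsup⟩ := pathGraph_exists_path a b hab
    have : p = q := by
      have := (pathGraph_isAcyclic n).path_unique ⟨p, hp⟩ ⟨q, hq⟩
      exact congrArg Subtype.val this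
    subst this
    intro k hk
    have := hsup k hk
    simp [min_eq_left hab, max_eq_right hab]; exact this
  · obtain ⟨q, hq, hsup⟩ := pathGraph_exists_path b a hab
    have : p = q.reverse := by
      have := (pathGraph_isAcyclic n).path_unique ⟨p, hp⟩ ⟨q.reverse, hq.reverse⟩
      exact congrArg Subtype.val this
    subst this
    intro k hk
    rw [SimpleGraph.Walk.support_reverse, List.mem_reverse] at hk
    have := hsup k hk
    simp [min_eq_right hab, max_eq_left hab]; exact ⟨this.1, this.2⟩



variable {α : Type*} [DecidableEq α] {T : SimpleGraph α}

lemma walk_dist_add_dist_le {a b x : α} (p : T.Walk a b) (hx : x ∈ p.support) :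
    T.dist a x + T.dist x b ≤ p.length := by
  have hspec := p.take_spec hx
  have h1 := SimpleGraph.dist_le (p.takeUntil x hx)
  have h2 := SimpleGraph.dist_le (p.dropUntil x hx)
  have h3 : (p.takeUntil x hx).length + (p.dropUntil x hx).length = p.length := by
    rw [← SimpleGraph.Walk.length_append, hspec]
  omega

lemma tree_path_length_eq_dist (hT : T.IsTree) {a b : α} (p : T.Walk a b) (hp : p.IsPath) :
    p.length = T.dist a b := by
  obtain ⟨q, hq, hlen⟩ := hT.isConnected.exists_path_of_dist a b
  have := (hT.existsUnique_path a b).unique hp hq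
  rw [this, hlen]

lemma tree_dist_ne (hT : T.IsTree) {c y : α} (h : T.Adj c y) (z : α) :
    T.dist y z ≠ T.dist c z := by
  intro he
  obtain ⟨q, hq, hlen⟩ := hT.isConnected.exists_path_of_dist y z
  have hyc : T.dist y c = 1 := (SimpleGraph.dist_eq_one_iff_adj).mpr h.symm
  have hcq : c ∉ q.support := by
    intro hc
    have := walk_dist_add_dist_le q hc
    omega
  have hr : (SimpleGraph.Walk.cons h q).IsPath :=
    (SimpleGraph.Walk.cons_isPath_iff h q).mpr ⟨hq, hcq⟩
  obtain ⟨r, hrp, hrlen⟩ := hT.isConnected.exists_path_of_dist c z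
  have heq := (hT.existsUnique_path c z).unique hr hrp
  have : (SimpleGraph.Walk.cons h q).length = r.length := by rw [heq]
  rw [SimpleGraph.Walk.length_cons, hlen, hrlen] at this
  omega

lemma tree_dist_cases (hT : T.IsTree) {c y : α} (h : T.Adj c y) (z : α) :
    T.dist y z + 1 = T.dist c z ∨ T.dist c z + 1 = T.dist y z := by
  have h1 : T.dist c z ≤ T.dist c y + T.dist y z := hT.isConnected.dist_triangle
  have h2 : T.dist y z ≤ T.dist y c + T.dist c z := hT.isConnected.dist_triangle
  have h3 : T.dist c y = 1 := (SimpleGraph.dist_eq_one_iff_adj).mpr h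
  have h4 : T.dist y c = 1 := (SimpleGraph.dist_eq_one_iff_adj).mpr h.symm
  have h5 := tree_dist_ne hT h z
  omega

/-- the branch of `T - c` in the direction of `y` -/
def branchSet (T : SimpleGraph α) (c y : α) : Set α := {z | T.dist y z < T.dist c z}

lemma mem_branchSet_self (hT : T.IsTree) {c y : α} (h : T.Adj c y) : y ∈ branchSet T c y := by
  have : T.dist c y = 1 := (SimpleGraph.dist_eq_one_iff_adj).mpr h
  simp [branchSet, SimpleGraph.dist_self, this]

lemma centre_not_mem_branchSet {c y : α} : c ∉ branchSet T c y := by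
  simp [branchSet, SimpleGraph.dist_self]

lemma branch_total (hT : T.IsTree) {c z : α} (hz : z ≠ c) :
    ∃ y, T.Adj c y ∧ z ∈ branchSet T c y := by
  obtain ⟨p, hp, hlen⟩ := hT.isConnected.exists_path_of_dist c z
  cases p with
  | nil => exact absurd rfl hz.symm
  | @cons _ x _ hadj q =>
    refine ⟨x, hadj, ?_⟩
    have h1 : T.dist x z ≤ q.length := SimpleGraph.dist_le q
    have h2 : q.length + 1 = T.dist c z := by
      rw [← hlen, SimpleGraph.Walk.length_cons]
    simp only [branchSet, Set.mem_setOf_eq]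
    omega

lemma branch_disjoint (hT : T.IsTree) {c y1 y2 z : α} (h1 : T.Adj c y1) (h2 : T.Adj c y2)
    (hz1 : z ∈ branchSet T c y1) (hz2 : z ∈ branchSet T c y2) : y1 = y2 := by
  simp only [branchSet, Set.mem_setOf_eq] at hz1 hz2
  obtain ⟨q1, hq1, hl1⟩ := hT.isConnected.exists_path_of_dist y1 z
  obtain ⟨q2, hq2, hl2⟩ := hT.isConnected.exists_path_of_dist y2 z
  have hd1 : T.dist y1 c = 1 := (SimpleGraph.dist_eq_one_iff_adj).mpr h1.symm
  have hd2 : T.dist y2 c = 1 := (SimpleGraph.dist_eq_one_iff_adj).mpr h2.symm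
  have hc1 : c ∉ q1.support := fun hc => by have := walk_dist_add_dist_le q1 hc; omega
  have hc2 : c ∉ q2.support := fun hc => by have := walk_dist_add_dist_le q2 hc; omega
  have hr1 : (SimpleGraph.Walk.cons h1 q1).IsPath :=
    (SimpleGraph.Walk.cons_isPath_iff h1 q1).mpr ⟨hq1, hc1⟩
  have hr2 : (SimpleGraph.Walk.cons h2 q2).IsPath :=
    (SimpleGraph.Walk.cons_isPath_iff h2 q2).mpr ⟨hq2, hc2⟩
  have heq := (hT.existsUnique_path c z).unique hr1 hr2
  have := congrArg SimpleGraph.Walk.support heq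
  rw [SimpleGraph.Walk.support_cons, SimpleGraph.Walk.support_cons,
    SimpleGraph.Walk.support_eq_cons q1, SimpleGraph.Walk.support_eq_cons q2] at this
  simp only [List.cons.injEq] at this
  exact this.2.1

lemma branch_edge (hT : T.IsTree) {c y1 y2 a b : α} (h1 : T.Adj c y1) (h2 : T.Adj c y2)
    (hadj : T.Adj a b) (ha : a ∈ branchSet T c y1) (hb : b ∈ branchSet T c y2) : y1 = y2 := by
  simp only [branchSet, Set.mem_setOf_eq] at ha hb
  have hab : T.dist a b = 1 := (SimpleGraph.dist_eq_one_iff_adj).mpr hadj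
  have hba : T.dist b a = 1 := (SimpleGraph.dist_eq_one_iff_adj).mpr hadj.symm
  have hne : T.dist a c ≠ T.dist b c := (tree_dist_ne hT hadj c).symm
  have e1 : T.dist a c = T.dist c a := SimpleGraph.dist_comm ..
  have e2 : T.dist b c = T.dist c b := SimpleGraph.dist_comm ..
  have t1 : T.dist c b ≤ T.dist c a + T.dist a b := hT.isConnected.dist_triangle
  have t2 : T.dist c a ≤ T.dist c b + T.dist b a := hT.isConnected.dist_triangle
  have c1 := tree_dist_cases hT h1 a
  have c2 := tree_dist_cases hT h2 b
  rcases lt_or_gt_of_ne (e1 ▸ e2 ▸ hne) with hlt | hgt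
  · -- dist c a < dist c b, so dist c b = dist c a + 1; show b ∈ branch y1
    have hy1b : T.dist y1 b < T.dist c b := by
      have t3 : T.dist y1 b ≤ T.dist y1 a + T.dist a b := hT.isConnected.dist_triangle
      omega
    exact branch_disjoint hT h1 h2 hy1b hb
  · have hy2a : T.dist y2 a < T.dist c a := by
      have t3 : T.dist y2 a ≤ T.dist y2 b + T.dist b a := hT.isConnected.dist_triangle
      omega
    exact branch_disjoint hT h1 h2 ha hy2a

lemma branch_walk_mem (hT : T.IsTree) {c y : α} (hcy : T.Adj c y) :
    ∀ {a t : α} (p : T.Walk a t), a ∈ branchSet T c y → t ∉ branchSet T c y →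
      c ∈ p.support := by
  intro a t p
  induction p with
  | nil => intro h1 h2; exact absurd h1 h2
  | @cons u x _ h q ih =>
    intro h1 h2
    rw [SimpleGraph.Walk.support_cons]
    by_cases hx : x = c
    · subst hx; exact List.mem_cons_of_mem _ q.start_mem_support
    · by_cases hxb : x ∈ branchSet T c y
      · exact List.mem_cons_of_mem _ (ih hxb h2)
      · obtain ⟨y', hy', hbr'⟩ := branch_total hT hx
        have : y = y' := branch_edge hT hcy hy' h h1 hbr'
        exact absurd (this ▸ hbr') hxb

lemma branch_path_subset (hT : T.IsTree) {c y a b : α} (hcy : T.Adj c y)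
    (p : T.Walk a b) (hp : p.IsPath) (ha : a ∈ branchSet T c y) (hb : b ∈ branchSet T c y) :
    ∀ x ∈ p.support, x ∈ branchSet T c y := by
  intro x hx
  by_contra hxbr
  have hcsub := branch_walk_mem hT hcy (p.takeUntil x hx) ha hxbr
  have hc : c ∈ p.support := (p.support_takeUntil_subset hx) hcsub
  have hlen : p.length = T.dist a b := tree_path_length_eq_dist hT p hp
  have hsplit := walk_dist_add_dist_le p hc
  simp only [branchSet, Set.mem_setOf_eq] at ha hb
  have c1 := tree_dist_cases hT hcy a
  have c2 := tree_dist_cases hT hcy b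
  have t1 : T.dist a b ≤ T.dist a y + T.dist y b := hT.isConnected.dist_triangle
  have e1 : T.dist a c = T.dist c a := SimpleGraph.dist_comm ..
  have e2 : T.dist a y = T.dist y a := SimpleGraph.dist_comm ..
  omega

lemma comap_reachable {β : Type*} {ι : β → α} (hinj : Function.Injective ι) :
    ∀ {u w : α} (p : T.Walk u w), (∀ x ∈ p.support, ∃ a', ι a' = x) →
      ∀ a b, ι a = u → ι b = w → (T.comap ι).Reachable a b := by
  intro u w p
  induction p with
  | nil =>
    intro _ a b ha hb
    have : a = b := hinj (ha.trans hb.symm)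
    subst this
    exact SimpleGraph.Reachable.refl _
  | @cons u x _ h q ih =>
    intro hsup a b ha hb
    obtain ⟨a2, ha2⟩ := hsup x (by simp)
    have hadj : (T.comap ι).Adj a a2 := by
      show T.Adj (ι a) (ι a2); rw [ha, ha2]; exact h
    exact hadj.reachable.trans (ih (fun x hx => hsup x (by simp [hx])) a2 b ha2 hb)

lemma comap_isTree {β : Type*} [Nonempty β] {ι : β → α} (hinj : Function.Injective ι)
    (hT : T.IsTree)
    (hconn : ∀ a b : β, ∃ p : T.Walk (ι a) (ι b), ∀ x ∈ p.support, ∃ a', ι a' = x) :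
    (T.comap ι).IsTree := by
  constructor
  · constructor
    intro a b
    obtain ⟨p, hp⟩ := hconn a b
    exact comap_reachable hinj p hp a b rfl rfl
  · intro v c hc
    let hhom : T.comap ι →g T := ⟨ι, fun h => h⟩
    have := (SimpleGraph.Walk.map_isCycle_iff_of_injective (p := c) (f := hhom)
      (by exact hinj)).mpr hc
    exact hT.IsAcyclic _ this


variable {V : Type*}

/-- interval property for a list of bags -/
def IVP (L : List (Set V)) : Prop :=
  ∀ (v : V) (a b c : ℕ), a ≤ b → b ≤ c →
    v ∈ L.getD a ∅ → v ∈ L.getD c ∅ → v ∈ L.getD b ∅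

lemma mem_getD_lt {L : List (Set V)} {a : ℕ} {v : V} (h : v ∈ L.getD a ∅) :
    a < L.length := by
  by_contra hc
  rw [List.getD_eq_default _ _ (by omega)] at h
  exact h

lemma getD_mem {L : List (Set V)} {a : ℕ} (h : a < L.length) : L.getD a ∅ ∈ L := by
  rw [List.getD_eq_getElem _ _ h]
  exact List.getElem_mem h

lemma IVP_nil : IVP ([] : List (Set V)) := by
  intro v a b c _ _ hva
  exact absurd (mem_getD_lt hva) (by simp)

lemma IVP_singleton (B : Set V) : IVP [B] := by
  intro v a b c hab hbc hva hvc
  have ha := mem_getD_lt hva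
  have hc := mem_getD_lt hvc
  simp only [List.length_singleton] at ha hc
  have : b = a := by omega
  rwa [this]

lemma IVP_glue {L1 L2 : List (Set V)} {A : Set V} (h1 : IVP L1) (h2 : IVP L2)
    (hA1 : ∀ B ∈ L1, A ⊆ B) (hA2 : ∀ B ∈ L2, A ⊆ B)
    (hcross : ∀ B1 ∈ L1, ∀ B2 ∈ L2, B1 ∩ B2 ⊆ A) : IVP (L1 ++ L2) := by
  intro v a b c hab hbc hva hvc
  set n1 := L1.length with hn1
  by_cases hcn : c < n1
  · rw [List.getD_append _ _ _ _ (by omega)] at hva hvc ⊢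
    exact h1 v a b c hab hbc hva hvc
  · by_cases han : a < n1
    · rw [List.getD_append _ _ _ _ han] at hva
      rw [List.getD_append_right _ _ _ _ (by omega)] at hvc
      have hc2 := mem_getD_lt hvc
      have hvA : v ∈ A :=
        hcross _ (getD_mem han) _ (getD_mem hc2) ⟨hva, hvc⟩
      by_cases hbn : b < n1
      · rw [List.getD_append _ _ _ _ hbn]
        exact hA1 _ (getD_mem hbn) hvA
      · rw [List.getD_append_right _ _ _ _ (by omega)]
        exact hA2 _ (getD_mem (by omega)) hvA
    · rw [List.getD_append_right _ _ _ _ (by omega)] at hva hvc ⊢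
      exact h2 v (a - n1) (b - n1) (c - n1) (by omega) (by omega) hva hvc

lemma IVP_map_union {L : List (Set V)} {A : Set V} (h : IVP L) :
    IVP (L.map (· ∪ A)) := by
  intro v a b c hab hbc hva hvc
  have ha := mem_getD_lt hva
  have hc := mem_getD_lt hvc
  rw [List.length_map] at ha hc
  have hb : b < L.length := by omega
  have key : ∀ (i : ℕ) (hi : i < L.length),
      (L.map (· ∪ A)).getD i ∅ = L.getD i ∅ ∪ A := by
    intro i hi
    rw [List.getD_eq_getElem _ _ (by simpa using hi), List.getD_eq_getElem _ _ hi,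
      List.getElem_map]
  rw [key a ha] at hva
  rw [key c hc] at hvc
  rw [key b hb]
  by_cases hvA : v ∈ A
  · exact Or.inr hvA
  · rcases hva with hva | hva
    · rcases hvc with hvc | hvc
      · exact Or.inl (h v a b c hab hbc hva hvc)
      · exact absurd hvc hvA
    · exact absurd hva hvA

end Helpers


variable {V : Type} [Fintype V] [DecidableEq V]

lemma key_decomp (G : SimpleGraph V) (w : ℕ) :
    ∀ (n : ℕ) (S : Set V) (m : ℕ) (T : SimpleGraph (Fin m)) (bag : Fin m → Set V),
      T.IsTree → S.ncard ≤ n →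
      (∀ i, bag i ⊆ S) →
      (∀ i, (bag i).ncard ≤ w) →
      (∀ u v : V, u ∈ S → v ∈ S → G.Adj u v → ∃ i, u ∈ bag i ∧ v ∈ bag i) →
      (∀ (v : V) (i j : Fin m) (p : T.Walk i j), p.IsPath → v ∈ bag i → v ∈ bag j →
        ∀ k ∈ p.support, v ∈ bag k) →
      ∃ L : List (Set V),
        (∀ B ∈ L, B ⊆ S) ∧
        (∀ B ∈ L, B.ncard ≤ w * (Nat.log 2 n + 1)) ∧
        (∀ u : V, u ∈ S → (∃ i, u ∈ bag i) → ∃ B ∈ L, u ∈ B) ∧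
        (∀ u v : V, u ∈ S → v ∈ S → G.Adj u v → ∃ B ∈ L, u ∈ B ∧ v ∈ B) ∧
        IVP L := by
  intro n
  induction n using Nat.strong_induction_on with
  | _ n IH =>
  intro S m T bag hT hS hsub hw hcover hpath
  classical
  by_cases hn1 : n ≤ 1
  · -- base case : |S| ≤ 1, no edges inside S
    refine ⟨[S ∩ {v | ∃ i, v ∈ bag i}], ?_, ?_, ?_, ?_, IVP_singleton _⟩
    · intro B hB
      rw [List.mem_singleton] at hB
      subst hB
      exact Set.inter_subset_left
    · intro B hB
      rw [List.mem_singleton] at hB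
      subst hB
      rcases Set.eq_empty_or_nonempty (S ∩ {v | ∃ i, v ∈ bag i}) with he | ⟨u, hu, i, hi⟩
      · simp [he]
      · have hw1 : 1 ≤ w := by
          have h1 : 0 < (bag i).ncard := by
            rw [Set.ncard_pos (Set.toFinite _)]
            exact ⟨u, hi⟩
          exact le_trans h1 (hw i)
        have h2 : (S ∩ {v | ∃ i, v ∈ bag i}).ncard ≤ S.ncard :=
          Set.ncard_le_ncard Set.inter_subset_left (Set.toFinite _)
        have h3 : 1 ≤ Nat.log 2 n + 1 := by omega
        calc (S ∩ {v | ∃ i, v ∈ bag i}).ncard ≤ 1 := by omega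
          _ ≤ w * (Nat.log 2 n + 1) := le_trans hw1 (Nat.le_mul_of_pos_right w (by omega))
    · intro u hu hex
      exact ⟨_, List.mem_singleton_self _, hu, hex⟩
    · intro u v hu hv hadj
      obtain ⟨i, hui, hvi⟩ := hcover u v hu hv hadj
      exact ⟨_, List.mem_singleton_self _, ⟨hu, i, hui⟩, ⟨hv, i, hvi⟩⟩
  · push_neg at hn1
    have hlog1 : 0 < Nat.log 2 n := Nat.log_pos (by omega) (by omega)
    have hlog : Nat.log 2 (n / 2) + 1 = Nat.log 2 n := by
      have h1 : Nat.log 2 (n / 2) = Nat.log 2 n - 1 := Nat.log_div_base 2 n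
      omega
    have hm : 0 < m := by
      obtain ⟨i⟩ := hT.isConnected.nonempty
      exact i.pos
    -- home nodes and centroid
    set home : V → Fin m := fun v => if h : ∃ i, v ∈ bag i then h.choose else ⟨0, hm⟩
      with hhome
    have hhome_mem : ∀ v : V, (∃ i, v ∈ bag i) → v ∈ bag (home v) := by
      intro v h
      rw [hhome]
      simp only [dif_pos h]
      exact h.choose_spec
    set Rf : Finset V := Finset.univ.filter (fun v => v ∈ S ∧ ∃ i, v ∈ bag i) with hRf
    set Φ : Fin m → ℕ := fun z => ∑ v ∈ Rf, T.dist z (home v) with hPhi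
    obtain ⟨c, _, hcmin⟩ := Finset.exists_min_image Finset.univ Φ ⟨⟨0, hm⟩, Finset.mem_univ _⟩
    -- the pieces
    set Sy : Fin m → Set V := fun y =>
      {v | v ∈ S ∧ v ∉ bag c ∧ (∃ i, v ∈ bag i) ∧ home v ∈ branchSet T c y} with hSy
    have hK2 : ∀ y : Fin m, T.Adj c y → ∀ v ∈ Sy y, ∀ t : Fin m, v ∈ bag t →
        t ∈ branchSet T c y := by
      intro y hy v hv t ht
      obtain ⟨hvS, hvc, hvex, hvbr⟩ := hv
      by_contra htbr
      obtain ⟨p, hp, _⟩ := hT.isConnected.exists_path_of_dist (home v) t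
      have hcp : c ∈ p.support := branch_walk_mem hT hy p hvbr htbr
      exact hvc (hpath v (home v) t p hp (hhome_mem v hvex) ht c hcp)
    have hK3 : ∀ y y' : Fin m, T.Adj c y → T.Adj c y' → y ≠ y' →
        ∀ v, v ∈ Sy y → v ∈ Sy y' → False := by
      intro y y' hy hy' hne v hv hv'
      exact hne (branch_disjoint hT hy hy' hv.2.2.2 hv'.2.2.2)
    -- recursive construction on each branch
    have hrec : ∀ y : Fin m, T.Adj c y → ∃ L : List (Set V),
        (∀ B ∈ L, B ⊆ Sy y) ∧
        (∀ B ∈ L, B.ncard ≤ w * (Nat.log 2 (n / 2) + 1)) ∧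
        (∀ u, u ∈ Sy y → ∃ B ∈ L, u ∈ B) ∧
        (∀ u v, u ∈ Sy y → v ∈ Sy y → G.Adj u v → ∃ B ∈ L, u ∈ B ∧ v ∈ B) ∧
        IVP L := by
      intro y hy
      -- size bound via the centroid property
      have hsize : 2 * (Sy y).ncard ≤ n := by
        set P := Rf.filter (fun v => home v ∈ branchSet T c y) with hP
        set Q := Rf.filter (fun v => ¬ home v ∈ branchSet T c y) with hQ
        have hSyP : Sy y ⊆ ↑P := by
          intro v hv
          rw [Finset.mem_coe, hP, Finset.mem_filter, hRf, Finset.mem_filter]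
          exact ⟨⟨Finset.mem_univ v, hv.1, hv.2.2.1⟩, hv.2.2.2⟩
        have h1 : (Sy y).ncard ≤ P.card := by
          rw [← Set.ncard_coe_finset]
          exact Set.ncard_le_ncard hSyP (Set.toFinite _)
        have hPsum : ∑ v ∈ P, T.dist c (home v) = (∑ v ∈ P, T.dist y (home v)) + P.card := by
          have hpt : ∀ v ∈ P, T.dist c (home v) = T.dist y (home v) + 1 := by
            intro v hv
            rw [hP, Finset.mem_filter] at hv
            have hbr := hv.2
            rcases tree_dist_cases hT hy (home v) with hcs | hcs
            · omega
            · exfalso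
              have : T.dist y (home v) < T.dist c (home v) := hbr
              omega
          rw [Finset.sum_congr rfl hpt, Finset.sum_add_distrib, Finset.sum_const,
            smul_eq_mul, mul_one]
        have hQsum : ∑ v ∈ Q, T.dist y (home v) = (∑ v ∈ Q, T.dist c (home v)) + Q.card := by
          have hpt : ∀ v ∈ Q, T.dist y (home v) = T.dist c (home v) + 1 := by
            intro v hv
            rw [hQ, Finset.mem_filter] at hv
            have hbr := hv.2
            rcases tree_dist_cases hT hy (home v) with hcs | hcs
            · exfalso
              exact hbr (by simp only [branchSet, Set.mem_setOf_eq]; omega)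
            · omega
          rw [Finset.sum_congr rfl hpt, Finset.sum_add_distrib, Finset.sum_const,
            smul_eq_mul, mul_one]
        have hsplitc : (∑ v ∈ P, T.dist c (home v)) + (∑ v ∈ Q, T.dist c (home v)) = Φ c := by
          rw [hP, hQ, hPhi]
          exact Finset.sum_filter_add_sum_filter_not Rf _ _
        have hsplity : (∑ v ∈ P, T.dist y (home v)) + (∑ v ∈ Q, T.dist y (home v)) = Φ y := by
          rw [hP, hQ, hPhi]
          exact Finset.sum_filter_add_sum_filter_not Rf _ _
        have hmin := hcmin y (Finset.mem_univ y)
        have hPQ : P.card + Q.card = Rf.card := by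
          rw [hP, hQ]
          exact Finset.card_filter_add_card_filter_not _
        have hRS : Rf.card ≤ n := by
          have hsub2 : ↑Rf ⊆ S := by
            intro v hv
            rw [Finset.mem_coe, hRf, Finset.mem_filter] at hv
            exact hv.2.1
          have := Set.ncard_le_ncard hsub2 (Set.toFinite _)
          rw [Set.ncard_coe_finset] at this
          omega
        omega
      have hS' : (Sy y).ncard ≤ n / 2 := by
        rw [Nat.le_div_iff_mul_le (by norm_num : 0 < 2)]
        omega
      -- the branch as a tree on Fin m'
      set β := {z : Fin m // z ∈ branchSet T c y} with hβ
      haveI : Nonempty β := ⟨⟨y, mem_branchSet_self hT hy⟩⟩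
      set e : Fin (Fintype.card β) ≃ β := (Fintype.equivFin β).symm with he
      set ι : Fin (Fintype.card β) → Fin m := fun a => (e a).val with hι
      have hinj : Function.Injective ι := fun a b hab => e.injective (Subtype.ext hab)
      have hιmem : ∀ a, ι a ∈ branchSet T c y := fun a => (e a).2
      have hιsurj : ∀ t : Fin m, t ∈ branchSet T c y → ∃ a, ι a = t := by
        intro t ht
        refine ⟨e.symm ⟨t, ht⟩, ?_⟩
        rw [hι]
        simp
      set T' := T.comap ι with hT'def
      have hT' : T'.IsTree := by
        refine comap_isTree hinj hT ?_
        intro a b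
        obtain ⟨p, hp, _⟩ := hT.isConnected.exists_path_of_dist (ι a) (ι b)
        refine ⟨p, fun x hx => ?_⟩
        exact hιsurj x (branch_path_subset hT hy p hp (hιmem a) (hιmem b) x hx)
      set bag' : Fin (Fintype.card β) → Set V := fun a => bag (ι a) ∩ Sy y with hbag'
      have hcover' : ∀ u v : V, u ∈ Sy y → v ∈ Sy y → G.Adj u v →
          ∃ a, u ∈ bag' a ∧ v ∈ bag' a := by
        intro u v hu hv hadj
        obtain ⟨t, hut, hvt⟩ := hcover u v hu.1 hv.1 hadj
        obtain ⟨a, ha⟩ := hιsurj t (hK2 y hy u hu t hut)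
        exact ⟨a, ⟨ha ▸ hut, hu⟩, ⟨ha ▸ hvt, hv⟩⟩
      have hpath' : ∀ (v : V) (i j : Fin (Fintype.card β)) (p : T'.Walk i j), p.IsPath →
          v ∈ bag' i → v ∈ bag' j → ∀ k ∈ p.support, v ∈ bag' k := by
        intro v i j p hp hvi hvj k hk
        let hom : T' →g T := ⟨ι, fun h => h⟩
        have hmp : (p.map hom).IsPath :=
          SimpleGraph.Walk.map_isPath_of_injective (by exact hinj) hp
        have hkmem : ι k ∈ (p.map hom).support := by
          rw [SimpleGraph.Walk.support_map]
          exact List.mem_map_of_mem hk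
        exact ⟨hpath v (ι i) (ι j) (p.map hom) hmp hvi.1 hvj.1 (ι k) hkmem, hvi.2⟩
      obtain ⟨L, hL1, hL2, hL3, hL4, hL5⟩ :=
        IH (n / 2) (Nat.div_lt_self (by omega) one_lt_two) (Sy y) (Fintype.card β) T' bag'
          hT' hS' (fun a => Set.inter_subset_right) 
          (fun a => le_trans (Set.ncard_le_ncard Set.inter_subset_left (Set.toFinite _)) (hw _))
          hcover' hpath'
      refine ⟨L, hL1, hL2, ?_, hL4, hL5⟩
      intro u hu
      refine hL3 u hu ?_
      obtain ⟨a, ha⟩ := hιsurj (home u) hu.2.2.2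
      exact ⟨a, ha ▸ hhome_mem u hu.2.2.1, hu⟩
    -- choose the lists
    choose F hF1 hF2 hF3 hF4 hF5 using hrec
    set F' : Fin m → List (Set V) := fun y =>
      if h : T.Adj c y then F y h else [] with hF'
    set block : Fin m → List (Set V) := fun y => (F' y).map (· ∪ bag c) with hblock
    set ys : List (Fin m) := (T.neighborFinset c).toList with hys
    have hysadj : ∀ y ∈ ys, T.Adj c y := by
      intro y hyl
      rw [hys, Finset.mem_toList, SimpleGraph.mem_neighborFinset] at hyl
      exact hyl
    set L : List (Set V) := (ys.map block).flatten ++ [bag c] with hL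
    have hbagc_mem : bag c ∈ L := by
      rw [hL]
      exact List.mem_append_right _ (List.mem_singleton_self _)
    have hblock_mem : ∀ (y : Fin m), y ∈ ys → ∀ B0 ∈ F' y, B0 ∪ bag c ∈ L := by
      intro y hyl B0 hB0
      rw [hL]
      refine List.mem_append_left _ ?_
      rw [List.mem_flatten]
      exact ⟨block y, List.mem_map_of_mem hyl, List.mem_map_of_mem hB0⟩
    have hmemL : ∀ B ∈ L, B = bag c ∨
        ∃ y, T.Adj c y ∧ ∃ B0, (∃ h : T.Adj c y, B0 ∈ F y h) ∧ B = B0 ∪ bag c := by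
      intro B hB
      rw [hL, List.mem_append] at hB
      rcases hB with hB | hB
      · rw [List.mem_flatten] at hB
        obtain ⟨l, hl, hBl⟩ := hB
        rw [List.mem_map] at hl
        obtain ⟨y, hyl, rfl⟩ := hl
        have hy := hysadj y hyl
        simp only [hblock, List.mem_map] at hBl
        obtain ⟨B0, hB0, rfl⟩ := hBl
        simp only [hF', dif_pos hy] at hB0
        exact Or.inr ⟨y, hy, B0, ⟨hy, hB0⟩, rfl⟩
      · exact Or.inl (List.mem_singleton.mp hB)
    have hSyS : ∀ y, Sy y ⊆ S := fun y v hv => hv.1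
    have hysmem : ∀ y, T.Adj c y → y ∈ ys := by
      intro y hy
      rw [hys, Finset.mem_toList, SimpleGraph.mem_neighborFinset]
      exact hy
    have happear : ∀ u : V, u ∈ S → (∃ i, u ∈ bag i) → u ∉ bag c →
        ∃ y, T.Adj c y ∧ u ∈ Sy y := by
      intro u hu hex huc
      have hne : home u ≠ c := by
        intro h
        exact huc (h ▸ hhome_mem u hex)
      obtain ⟨y, hy, hbr⟩ := branch_total hT hne
      exact ⟨y, hy, hu, huc, hex, hbr⟩
    refine ⟨L, ?_, ?_, ?_, ?_, ?_⟩
    · -- subsets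
      intro B hB
      rcases hmemL B hB with rfl | ⟨y, hy, B0, ⟨hh, hB0⟩, rfl⟩
      · exact hsub c
      · exact Set.union_subset (le_trans (hF1 y hh B0 hB0) (hSyS y)) (hsub c)
    · -- sizes
      intro B hB
      rcases hmemL B hB with rfl | ⟨y, hy, B0, ⟨hh, hB0⟩, rfl⟩
      · exact le_trans (hw c) (Nat.le_mul_of_pos_right w (by omega))
      · refine le_trans (Set.ncard_union_le _ _) ?_
        have h1 := hF2 y hh B0 hB0
        have h2 := hw c
        calc B0.ncard + (bag c).ncard ≤ w * (Nat.log 2 (n / 2) + 1) + w := by omega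
          _ = w * (Nat.log 2 (n / 2) + 1 + 1) := by ring
          _ = w * (Nat.log 2 n + 1) := by rw [hlog]
    · -- appears
      intro u hu hex
      by_cases huc : u ∈ bag c
      · exact ⟨bag c, hbagc_mem, huc⟩
      · obtain ⟨y, hy, hSyu⟩ := happear u hu hex huc
        obtain ⟨B0, hB0, huB0⟩ := hF3 y hy u hSyu
        refine ⟨B0 ∪ bag c, ?_, Or.inl huB0⟩
        refine hblock_mem y (hysmem y hy) B0 ?_
        simp only [hF', dif_pos hy]
        exact hB0
    · -- cover
      intro u v hu hv hadj
      obtain ⟨t, hut, hvt⟩ := hcover u v hu hv hadj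
      by_cases huc : u ∈ bag c
      · by_cases hvc : v ∈ bag c
        · exact ⟨bag c, hbagc_mem, huc, hvc⟩
        · obtain ⟨y, hy, hSyv⟩ := happear v hv ⟨t, hvt⟩ hvc
          obtain ⟨B0, hB0, hvB0⟩ := hF3 y hy v hSyv
          refine ⟨B0 ∪ bag c, ?_, Or.inr huc, Or.inl hvB0⟩
          refine hblock_mem y (hysmem y hy) B0 ?_
          simp only [hF', dif_pos hy]
          exact hB0
      · obtain ⟨y, hy, hSyu⟩ := happear u hu ⟨t, hut⟩ huc
        by_cases hvc : v ∈ bag c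
        · obtain ⟨B0, hB0, huB0⟩ := hF3 y hy u hSyu
          refine ⟨B0 ∪ bag c, ?_, Or.inl huB0, Or.inr hvc⟩
          refine hblock_mem y (hysmem y hy) B0 ?_
          simp only [hF', dif_pos hy]
          exact hB0
        · obtain ⟨y', hy', hSyv⟩ := happear v hv ⟨t, hvt⟩ hvc
          have htbr : t ∈ branchSet T c y := hK2 y hy u hSyu t hut
          have htbr' : t ∈ branchSet T c y' := hK2 y' hy' v hSyv t hvt
          have : y' = y := branch_disjoint hT hy' hy htbr' htbr
          subst this
          obtain ⟨B0, hB0, huB0, hvB0⟩ := hF4 y' hy' u v hSyu hSyv hadj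
          refine ⟨B0 ∪ bag c, ?_, Or.inl huB0, Or.inl hvB0⟩
          refine hblock_mem y' (hysmem y' hy') B0 ?_
          simp only [hF', dif_pos hy']
          exact hB0
    · -- interval property by induction over the blocks
      have hglue : ∀ ys' : List (Fin m), (∀ y ∈ ys', T.Adj c y) → ys'.Nodup →
          IVP ((ys'.map block).flatten ++ [bag c]) ∧
          (∀ B ∈ (ys'.map block).flatten ++ [bag c], bag c ⊆ B ∧
            ∀ x ∈ B, x ∈ bag c ∨ ∃ y ∈ ys', x ∈ Sy y) := by
        intro ys'
        induction ys' with
        | nil =>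
          intro _ _
          constructor
          · simpa using IVP_singleton (bag c)
          · intro B hB
            simp only [List.map_nil, List.flatten_nil, List.nil_append,
              List.mem_singleton] at hB
            subst hB
            exact ⟨le_refl _, fun x hx => Or.inl hx⟩
        | cons y t ihl =>
          intro hadjs hnd
          have hy : T.Adj c y := hadjs y (List.mem_cons_self)
          obtain ⟨iht1, iht2⟩ := ihl (fun z hz => hadjs z (List.mem_cons_of_mem y hz))
            (List.Nodup.of_cons hnd)
          have hrw : (((y :: t).map block).flatten ++ [bag c]) =
              block y ++ ((t.map block).flatten ++ [bag c]) := by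
            simp [List.append_assoc]
          rw [hrw]
          have hyblock : ∀ B ∈ block y, ∃ B0, (B0 ∈ F y hy ∧ B0 ⊆ Sy y) ∧ B = B0 ∪ bag c := by
            intro B hB
            simp only [hblock, List.mem_map] at hB
            obtain ⟨B0, hB0, rfl⟩ := hB
            simp only [hF', dif_pos hy] at hB0
            exact ⟨B0, ⟨hB0, hF1 y hy B0 hB0⟩, rfl⟩
          constructor
          · refine IVP_glue (A := bag c) ?_ iht1 ?_ ?_ ?_
            · have : IVP (F y hy) := hF5 y hy
              have := IVP_map_union (A := bag c) this
              simp only [hblock, hF', dif_pos hy]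
              exact this
            · intro B hB
              obtain ⟨B0, _, rfl⟩ := hyblock B hB
              exact Set.subset_union_right
            · intro B hB
              exact (iht2 B hB).1
            · intro B1 hB1 B2 hB2 x hx
              obtain ⟨B0, ⟨_, hB0sub⟩, rfl⟩ := hyblock B1 hB1
              rcases hx.1 with hxB0 | hxc
              · rcases (iht2 B2 hB2).2 x hx.2 with hxc | ⟨y'', hy''t, hxSy⟩
                · exact hxc
                · exfalso
                  have hyne : y ≠ y'' := by
                    intro h
                    rw [List.nodup_cons] at hnd
                    exact hnd.1 (h ▸ hy''t)
                  exact hK3 y y'' hy (hadjs y'' (List.mem_cons_of_mem y hy''t)) hyne x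
                    (hB0sub hxB0) hxSy
              · exact hxc
          · intro B hB
            rw [List.mem_append] at hB
            rcases hB with hB | hB
            · obtain ⟨B0, ⟨_, hB0sub⟩, rfl⟩ := hyblock B hB
              refine ⟨Set.subset_union_right, fun x hx => ?_⟩
              rcases hx with hx | hx
              · exact Or.inr ⟨y, List.mem_cons_self, hB0sub hx⟩
              · exact Or.inl hx
            · obtain ⟨h1, h2⟩ := iht2 B hB
              refine ⟨h1, fun x hx => ?_⟩
              rcases h2 x hx with hxc | ⟨y'', hy'', hxSy⟩
              · exact Or.inl hxc
              · exact Or.inr ⟨y'', List.mem_cons_of_mem y hy'', hxSy⟩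
      exact (hglue ys hysadj (Finset.nodup_toList _)).1


section P23


variable {V : Type} [Fintype V] [DecidableEq V] (G : SimpleGraph V)

def trivialPD : PathDecomp G :=
  ⟨1, fun _ => Set.univ, fun u v _ => ⟨0, trivial, trivial⟩, fun _ _ _ _ _ _ _ _ => trivial⟩

lemma pathWidth_mem : pathWidth G ∈ Set.range (PathDecomp.width (G := G)) :=
  Nat.sInf_mem ⟨_, ⟨trivialPD G, rfl⟩⟩

lemma bubbleWidth_mem : bubbleWidth G ∈ Set.range (ordWidth G) :=
  Nat.sInf_mem ⟨_, ⟨(Fintype.equivFin V).symm, rfl⟩⟩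

lemma mem_prefixSet_iff {b : Fin (Fintype.card V) ≃ V} {i : Fin (Fintype.card V)} {x : V} :
    x ∈ prefixSet b i ↔ b.symm x ≤ i := by
  constructor
  · rintro ⟨j, hj, rfl⟩
    simpa using hj
  · intro h
    exact ⟨b.symm x, h, b.apply_symm_apply x⟩

/-- Part 2 construction : pathWidth ≤ ordWidth + 1 -/
lemma pathWidth_le_ordWidth_succ (b : Fin (Fintype.card V) ≃ V) :
    pathWidth G ≤ ordWidth G b + 1 := by
  classical
  set bagf : Fin (Fintype.card V) → Set V := fun i =>
    {u | u = b i ∨ (((b.symm u : ℕ) < i) ∧ ∃ x, G.Adj u x ∧ (i : ℕ) ≤ (b.symm x : ℕ))}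
    with hbagf
  have hcover : ∀ ⦃u v : V⦄, G.Adj u v → ∃ i, u ∈ bagf i ∧ v ∈ bagf i := by
    intro u v huv
    rcases lt_trichotomy ((b.symm u : ℕ)) ((b.symm v : ℕ)) with h | h | h
    · refine ⟨b.symm v, Or.inr ⟨?_, v, huv, le_rfl⟩, Or.inl (b.apply_symm_apply v).symm⟩
      simpa using h
    · exact absurd (b.symm.injective (Fin.ext h)) (G.ne_of_adj huv)
    · refine ⟨b.symm u, Or.inl (b.apply_symm_apply u).symm, Or.inr ⟨?_, u, huv.symm, le_rfl⟩⟩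
      simpa using h
  have hinterval : ∀ (v : V) (i j k : Fin (Fintype.card V)), i ≤ j → j ≤ k →
      v ∈ bagf i → v ∈ bagf k → v ∈ bagf j := by
    intro v i j k hij hjk hvi hvk
    by_cases hbj : v = b j
    · exact Or.inl hbj
    · have hne : (b.symm v : ℕ) ≠ (j : ℕ) := by
        intro h
        exact hbj (by rw [← b.apply_symm_apply v, Fin.ext h])
      have hij' : (i : ℕ) ≤ (j : ℕ) := hij
      have hjk' : (j : ℕ) ≤ (k : ℕ) := hjk
      have hvlt : (b.symm v : ℕ) < (j : ℕ) := by
        rcases hvi with h | ⟨h1, _⟩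
        · have : (b.symm v : ℕ) = (i : ℕ) := by rw [h]; simp
          omega
        · omega
      refine Or.inr ⟨hvlt, ?_⟩
      rcases hvk with h | ⟨_, x, hx1, hx2⟩
      · have : (b.symm v : ℕ) = (k : ℕ) := by rw [h]; simp
        omega
      · exact ⟨x, hx1, by omega⟩
  set D : PathDecomp G := ⟨Fintype.card V, bagf, hcover, hinterval⟩ with hD
  refine le_trans (Nat.sInf_le ⟨D, rfl⟩) ?_
  have hwidth : D.width = Finset.univ.sup fun i => (bagf i).ncard := rfl
  rw [hwidth]
  refine Finset.sup_le fun i _ => ?_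
  have hsplit : bagf i = insert (b i)
      {u | ((b.symm u : ℕ) < i) ∧ ∃ x, G.Adj u x ∧ (i : ℕ) ≤ (b.symm x : ℕ)} := rfl
  rw [hsplit]
  refine le_trans (Set.ncard_insert_le _ _) ?_
  have hA : {u | ((b.symm u : ℕ) < i) ∧ ∃ x, G.Adj u x ∧ (i : ℕ) ≤ (b.symm x : ℕ)}.ncard
      ≤ ordWidth G b := by
    rcases Nat.eq_zero_or_pos (i : ℕ) with hi0 | hipos
    · have hemp : {u | ((b.symm u : ℕ) < i) ∧ ∃ x, G.Adj u x ∧ (i : ℕ) ≤ (b.symm x : ℕ)} = ∅ := by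
        ext u
        simp only [Set.mem_setOf_eq, Set.mem_empty_iff_false, iff_false, not_and]
        intro h
        omega
      rw [hemp]
      simp
    · have hi1 : (i : ℕ) - 1 < Fintype.card V := by have := i.isLt; omega
      set i' : Fin (Fintype.card V) := ⟨(i : ℕ) - 1, hi1⟩ with hi'
      have hle : cutSize G (prefixSet b i') ≤ ordWidth G b := by
        unfold ordWidth
        exact Finset.le_sup (f := fun j => cutSize G (prefixSet b j)) (Finset.mem_univ i')
      refine le_trans ?_ hle
      unfold cutSize
      set f : V → V × V := fun u =>
        (u, if h : ∃ x, G.Adj u x ∧ (i : ℕ) ≤ (b.symm x : ℕ) then h.choose else u) with hf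
      refine Set.ncard_le_ncard_of_injOn f ?_ ?_ (Set.toFinite _)
      · rintro u ⟨hu1, hu2⟩
        simp only [hf, dif_pos hu2]
        obtain ⟨hadj, hxe⟩ := hu2.choose_spec
        refine ⟨hadj, ?_, ?_⟩
        · rw [mem_prefixSet_iff, Fin.le_def]
          simp only [hi']
          omega
        · rw [mem_prefixSet_iff, Fin.le_def]
          simp only [hi']
          omega
      · intro u _ u' _ huu'
        exact congrArg Prod.fst huu'
  omega

/-- if the graph has an ordering of width 0 it has no edges -/
lemma no_edges_of_ordWidth_zero (b : Fin (Fintype.card V) ≃ V)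
    (h : ordWidth G b = 0) : ∀ u v, ¬ G.Adj u v := by
  intro u v huv
  rcases lt_trichotomy ((b.symm u : ℕ)) ((b.symm v : ℕ)) with hlt | heq | hgt
  case _ =>
    have hcut : cutSize G (prefixSet b (b.symm u)) = 0 := by
      refine Nat.eq_zero_of_le_zero ?_
      rw [← h]
      unfold ordWidth
      exact Finset.le_sup (f := fun i => cutSize G (prefixSet b i)) (Finset.mem_univ _)
    have hp2 : v ∉ prefixSet b (b.symm u) := by
      intro hc
      rw [mem_prefixSet_iff, Fin.le_def] at hc
      omega
    have hmem : (u, v) ∈ {p : V × V | G.Adj p.1 p.2 ∧ p.1 ∈ prefixSet b (b.symm u)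
        ∧ p.2 ∉ prefixSet b (b.symm u)} :=
      ⟨huv, mem_prefixSet_iff.mpr le_rfl, hp2⟩
    rw [cutSize, Set.ncard_eq_zero (Set.toFinite _)] at hcut
    rw [hcut] at hmem
    exact hmem
  case _ => exact absurd (b.symm.injective (Fin.ext heq)) (G.ne_of_adj huv)
  case _ =>
    have hcut : cutSize G (prefixSet b (b.symm v)) = 0 := by
      refine Nat.eq_zero_of_le_zero ?_
      rw [← h]
      unfold ordWidth
      exact Finset.le_sup (f := fun i => cutSize G (prefixSet b i)) (Finset.mem_univ _)
    have hp2 : u ∉ prefixSet b (b.symm v) := by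
      intro hc
      rw [mem_prefixSet_iff, Fin.le_def] at hc
      omega
    have hmem : (v, u) ∈ {p : V × V | G.Adj p.1 p.2 ∧ p.1 ∈ prefixSet b (b.symm v)
        ∧ p.2 ∉ prefixSet b (b.symm v)} :=
      ⟨huv.symm, mem_prefixSet_iff.mpr le_rfl, hp2⟩
    rw [cutSize, Set.ncard_eq_zero (Set.toFinite _)] at hcut
    rw [hcut] at hmem
    exact hmem

lemma pathWidth_eq_zero_of_no_edges (h : ∀ u v, ¬ G.Adj u v) : pathWidth G = 0 := by
  have : pathWidth G ≤ 0 := by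
    refine Nat.sInf_le ⟨⟨0, fun i => ∅, fun u v huv => absurd huv (h u v),
      fun v i => i.elim0⟩, ?_⟩
    simp [PathDecomp.width]
  omega

/-- Part 2 : pathWidth ≤ 2 * bubbleWidth -/
lemma pathWidth_le_two_mul_bubbleWidth : pathWidth G ≤ 2 * bubbleWidth G := by
  obtain ⟨b, hb⟩ := bubbleWidth_mem G
  rcases Nat.eq_zero_or_pos (bubbleWidth G) with h0 | hpos
  · rw [pathWidth_eq_zero_of_no_edges G (no_edges_of_ordWidth_zero G b (by rw [hb, h0]))]
    omega
  · have := pathWidth_le_ordWidth_succ G b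
    rw [hb] at this
    omega

lemma key_mono_aux {N a a' r r' : ℕ} (hr' : r' < N) (h : a * N + r ≤ a' * N + r') :
    a ≤ a' := by
  by_contra hc
  push_neg at hc
  have h2 : a' * N + N ≤ a * N := by
    have := Nat.mul_le_mul_right N (Nat.succ_le_of_lt hc)
    rwa [Nat.succ_mul] at this
  have h3 : a' * N + r' < a' * N + N := Nat.add_lt_add_left hr' _
  have h4 : a * N + r < a * N := lt_of_lt_of_le (lt_of_le_of_lt h h3) h2
  exact absurd h4 (by simp)

lemma ncard_adj_pairs_le {d : ℕ} (hdeg : ∀ v, (G.neighborSet v).ncard ≤ d) (B : Set V) :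
    {p : V × V | p.1 ∈ B ∧ G.Adj p.1 p.2}.ncard ≤ B.ncard * d := by
  classical
  have hset : {p : V × V | p.1 ∈ B ∧ G.Adj p.1 p.2} =
      ↑(B.toFinset.biUnion fun u => (G.neighborFinset u).image fun x => (u, x)) := by
    ext ⟨u, x⟩
    simp only [Set.mem_setOf_eq, Finset.coe_biUnion, Set.mem_iUnion, Finset.mem_coe,
      Finset.mem_image, Set.mem_toFinset, SimpleGraph.mem_neighborFinset]
    constructor
    · rintro ⟨h1, h2⟩
      exact ⟨u, h1, x, h2, rfl⟩
    · rintro ⟨u', h1, x', h2, heq⟩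
      cases heq
      exact ⟨h1, h2⟩
  rw [hset, Set.ncard_coe_finset]
  refine le_trans Finset.card_biUnion_le ?_
  have hstep : ∀ u ∈ B.toFinset, ((G.neighborFinset u).image fun x => (u, x)).card ≤ d := by
    intro u _
    refine le_trans Finset.card_image_le ?_
    have : (G.neighborFinset u).card = (G.neighborSet u).ncard := by
      rw [SimpleGraph.neighborFinset_def, Set.ncard_eq_toFinset_card']
    rw [this]
    exact hdeg u
  refine le_trans (Finset.sum_le_sum hstep) ?_
  rw [Finset.sum_const, smul_eq_mul, Set.ncard_eq_toFinset_card']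

/-- Part 3 : bubbleWidth ≤ d * pathWidth -/
lemma bubbleWidth_le_d_mul_pathWidth {d : ℕ} (hdeg : ∀ v, (G.neighborSet v).ncard ≤ d) :
    bubbleWidth G ≤ d * pathWidth G := by
  classical
  obtain ⟨D, hD⟩ := pathWidth_mem G
  rcases Nat.eq_zero_or_pos D.m with hm0 | hmpos
  · -- no edges at all, any ordering has width 0
    have hno : ∀ u v, ¬ G.Adj u v := by
      intro u v huv
      obtain ⟨i, _⟩ := D.cover huv
      exact absurd i.isLt (by omega)
    have : ordWidth G (Fintype.equivFin V).symm = 0 := by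
      unfold ordWidth
      refine Nat.eq_zero_of_le_zero (Finset.sup_le fun i _ => ?_)
      have : {p : V × V | G.Adj p.1 p.2 ∧ p.1 ∈ prefixSet (Fintype.equivFin V).symm i
          ∧ p.2 ∉ prefixSet (Fintype.equivFin V).symm i} = ∅ := by
        ext ⟨u, v⟩
        simp only [Set.mem_setOf_eq, Set.mem_empty_iff_false, iff_false, not_and]
        intro h
        exact absurd h (hno u v)
      rw [cutSize, this]
      simp
    have h1 : bubbleWidth G ≤ ordWidth G (Fintype.equivFin V).symm := Nat.sInf_le ⟨_, rfl⟩
    omega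
  · set N := Fintype.card V with hN
    set f : V → ℕ := fun v => sInf {k | ∃ j : Fin D.m, (j : ℕ) = k ∧ v ∈ D.bag j} with hf
    have hfmem : ∀ v : V, (∃ j, v ∈ D.bag j) →
        ∃ j : Fin D.m, (j : ℕ) = f v ∧ v ∈ D.bag j := by
      intro v ⟨j, hj⟩
      exact Nat.sInf_mem (⟨(j : ℕ), j, rfl, hj⟩ :
        {k | ∃ j : Fin D.m, (j : ℕ) = k ∧ v ∈ D.bag j}.Nonempty)
    have hfle : ∀ (v : V) (j : Fin D.m), v ∈ D.bag j → f v ≤ (j : ℕ) :=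
      fun v j hj => Nat.sInf_le ⟨j, rfl, hj⟩
    have hflt : ∀ v : V, f v < D.m := by
      intro v
      by_cases h : ∃ j, v ∈ D.bag j
      · obtain ⟨j, hj, _⟩ := hfmem v h
        exact hj ▸ j.isLt
      · have hemp : {k | ∃ j : Fin D.m, (j : ℕ) = k ∧ v ∈ D.bag j} = ∅ := by
          ext k
          simp only [Set.mem_setOf_eq, Set.mem_empty_iff_false, iff_false]
          rintro ⟨j, _, hj⟩
          exact h ⟨j, hj⟩
        have h0 : f v = 0 := by
          simp only [hf, hemp, Nat.sInf_empty]
        omega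
    set key : V → ℕ := fun v => f v * N + ((Fintype.equivFin V) v : ℕ) with hkey
    have hkeyinj : Function.Injective key := by
      intro u v huv
      have hu := ((Fintype.equivFin V) u).isLt
      have hv := ((Fintype.equivFin V) v).isLt
      have h1 : f u ≤ f v := key_mono_aux hv (le_of_eq huv)
      have h2 : f v ≤ f u := key_mono_aux hu (le_of_eq huv.symm)
      have h3 : f u = f v := le_antisymm h1 h2
      rw [hkey] at huv
      simp only [h3] at huv
      have : ((Fintype.equivFin V) u : ℕ) = ((Fintype.equivFin V) v : ℕ) := by omega
      exact (Fintype.equivFin V).injective (Fin.ext this)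
    set s : Finset ℕ := Finset.univ.image key with hs
    have hcard : s.card = N := by
      rw [hs, Finset.card_image_of_injective _ hkeyinj, Finset.card_univ]
    set e2 : V ≃ {x // x ∈ s} := Equiv.ofBijective
      (fun v => ⟨key v, Finset.mem_image_of_mem key (Finset.mem_univ v)⟩)
      ⟨fun u v huv => hkeyinj (congrArg Subtype.val huv), by
        rintro ⟨x, hx⟩
        obtain ⟨v, _, rfl⟩ := Finset.mem_image.mp hx
        exact ⟨v, rfl⟩⟩ with he2
    set b : Fin N ≃ V := (s.orderIsoOfFin hcard).toEquiv.trans e2.symm with hb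
    have hbkey : ∀ i : Fin N, key (b i) = ((s.orderIsoOfFin hcard) i : ℕ) := by
      intro i
      have : e2 (b i) = (s.orderIsoOfFin hcard) i := by
        rw [hb]
        simp
      rw [← this, he2]
      rfl
    have hmono : ∀ i j : Fin N, i ≤ j → key (b i) ≤ key (b j) := by
      intro i j hij
      rw [hbkey, hbkey]
      exact (s.orderIsoOfFin hcard).monotone hij
    refine le_trans (Nat.sInf_le ⟨b, rfl⟩) ?_
    rw [← hD, mul_comm]
    unfold ordWidth
    refine Finset.sup_le fun i _ => ?_
    by_cases hiN : (i : ℕ) + 1 < N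
    · set y : V := b ⟨(i : ℕ) + 1, hiN⟩ with hy
      set jstar : Fin D.m := ⟨f y, hflt y⟩ with hjstar
      have hsub : {p : V × V | G.Adj p.1 p.2 ∧ p.1 ∈ prefixSet b i ∧ p.2 ∉ prefixSet b i}
          ⊆ {p : V × V | p.1 ∈ D.bag jstar ∧ G.Adj p.1 p.2} := by
        rintro ⟨u, v⟩ ⟨hadj, hu, hv⟩
        rw [mem_prefixSet_iff, Fin.le_def] at hu
        rw [mem_prefixSet_iff, Fin.le_def] at hv
        push_neg at hv
        have hposu : (b.symm u : ℕ) ≤ (i : ℕ) := hu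
        have hposv : (i : ℕ) < (b.symm v : ℕ) := hv
        have hku : key u ≤ key y := by
          have := hmono (b.symm u) ⟨(i : ℕ) + 1, hiN⟩ (by rw [Fin.le_def]; simpa using by omega)
          rwa [b.apply_symm_apply] at this
        have hkv : key y ≤ key v := by
          have := hmono ⟨(i : ℕ) + 1, hiN⟩ (b.symm v) (by rw [Fin.le_def]; simpa using by omega)
          rwa [b.apply_symm_apply] at this
        have hfu : f u ≤ f y := key_mono_aux ((Fintype.equivFin V) y).isLt hku
        have hfv : f y ≤ f v := key_mono_aux ((Fintype.equivFin V) v).isLt hkv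
        obtain ⟨jc, hujc, hvjc⟩ := D.cover hadj
        obtain ⟨ju, hju, hujub⟩ := hfmem u ⟨jc, hujc⟩
        have hfvjc : f v ≤ (jc : ℕ) := hfle v jc hvjc
        refine ⟨?_, hadj⟩
        refine D.interval u ju jstar jc ?_ ?_ hujub hujc
        · rw [Fin.le_def, hjstar]
          simp only []
          omega
        · rw [Fin.le_def, hjstar]
          simp only []
          omega
      refine le_trans (Set.ncard_le_ncard hsub (Set.toFinite _)) ?_
      refine le_trans (ncard_adj_pairs_le G hdeg _) ?_
      refine Nat.mul_le_mul_right d ?_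
      unfold PathDecomp.width
      exact Finset.le_sup (f := fun j => (D.bag j).ncard) (Finset.mem_univ jstar)
    · have huniv : prefixSet b i = Set.univ := by
        ext x
        simp only [Set.mem_univ, iff_true]
        rw [mem_prefixSet_iff, Fin.le_def]
        have := (b.symm x).isLt
        omega
      have : {p : V × V | G.Adj p.1 p.2 ∧ p.1 ∈ prefixSet b i ∧ p.2 ∉ prefixSet b i} = ∅ := by
        ext p
        simp [huniv]
      rw [cutSize, this]
      simp


end P23

section Part1
variable {V : Type} [Fintype V] [DecidableEq V] (G : SimpleGraph V)

lemma treeWidth_le_pathWidth : treeWidth G ≤ pathWidth G := by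
  obtain ⟨D, hD⟩ := pathWidth_mem G
  rw [← hD]
  rcases Nat.eq_zero_or_pos D.m with h0 | hpos
  · set TD : TreeDecomp G :=
      ⟨1, ⊥, ⟨⟨fun u v => by rw [Subsingleton.elim u v]⟩, SimpleGraph.isAcyclic_bot⟩,
        fun _ => ∅,
        fun u v huv => by
          obtain ⟨i, _⟩ := D.cover huv
          exact absurd i.isLt (by omega),
        fun v i j p hp hvi hvj k hk => hvi⟩ with hTD
    refine le_trans (Nat.sInf_le ⟨TD, rfl⟩) ?_
    have hwid : TD.width = Finset.univ.sup fun _ : Fin 1 => (∅ : Set V).ncard := rfl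
    rw [hwid]
    simp
  · set TD : TreeDecomp G :=
      ⟨D.m, SimpleGraph.pathGraph D.m, pathGraph_isTree _ hpos, D.bag, D.cover,
        fun v i j p hp hvi hvj k hk => by
          obtain ⟨h1, h2⟩ := pathGraph_path_support p hp k hk
          have hmin : v ∈ D.bag (min i j) := by
            rcases le_total i j with h | h
            · rwa [min_eq_left h]
            · rwa [min_eq_right h]
          have hmax : v ∈ D.bag (max i j) := by
            rcases le_total i j with h | h
            · rwa [max_eq_right h]
            · rwa [max_eq_left h]
          exact D.interval v _ k _ h1 h2 hmin hmax⟩ with hTD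
    refine le_trans (Nat.sInf_le ⟨TD, rfl⟩) ?_
    have hwid : TD.width = Finset.univ.sup fun i => (D.bag i).ncard := rfl
    rw [hwid]
    exact le_of_eq rfl
end Part1

section Part4
variable {V : Type} [Fintype V] [DecidableEq V] (G : SimpleGraph V)

def trivialTD : TreeDecomp G :=
  ⟨1, ⊥, ⟨⟨fun u v => by rw [Subsingleton.elim u v]⟩, SimpleGraph.isAcyclic_bot⟩,
    fun _ => Set.univ, fun u v _ => ⟨0, trivial, trivial⟩,
    fun v i j p hp hvi hvj k hk => trivial⟩

lemma treeWidth_mem : treeWidth G ∈ Set.range (TreeDecomp.width (G := G)) :=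
  Nat.sInf_mem ⟨_, ⟨trivialTD G, rfl⟩⟩

lemma pathWidth_le_log_mul_treeWidth :
    pathWidth G ≤ (Nat.log 2 (Fintype.card V) + 1) * treeWidth G := by
  obtain ⟨D, hD⟩ := treeWidth_mem G
  have hwbag : ∀ i, (D.bag i).ncard ≤ D.width := by
    intro i
    unfold TreeDecomp.width
    exact Finset.le_sup (f := fun i => (D.bag i).ncard) (Finset.mem_univ i)
  obtain ⟨L, hL1, hL2, hL3, hL4, hL5⟩ :=
    key_decomp G D.width (Fintype.card V) Set.univ D.m D.T D.bag D.isTree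
      (by rw [Set.ncard_univ, Nat.card_eq_fintype_card]) (fun i => Set.subset_univ _) hwbag
      (fun u v _ _ h => D.cover h) D.pathCond
  set PD : PathDecomp G :=
    ⟨L.length, fun i => L.get i,
      by
        intro u v huv
        obtain ⟨B, hB, huB, hvB⟩ := hL4 u v trivial trivial huv
        obtain ⟨i, hi⟩ := List.mem_iff_get.mp hB
        refine ⟨i, ?_, ?_⟩
        · show u ∈ L.get i
          rw [hi]; exact huB
        · show v ∈ L.get i
          rw [hi]; exact hvB,
      by
        intro v i j k hij hjk hvi hvk
        have h1 : v ∈ L.getD (i : ℕ) ∅ := by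
          rw [List.getD_eq_getElem _ _ i.isLt]
          simpa using hvi
        have h2 : v ∈ L.getD (k : ℕ) ∅ := by
          rw [List.getD_eq_getElem _ _ k.isLt]
          simpa using hvk
        have h3 := hL5 v (i : ℕ) (j : ℕ) (k : ℕ) hij hjk h1 h2
        rw [List.getD_eq_getElem _ _ j.isLt] at h3
        simpa using h3⟩ with hPD
  refine le_trans (Nat.sInf_le ⟨PD, rfl⟩) ?_
  have hwid : PD.width = Finset.univ.sup fun i : Fin L.length => (L.get i).ncard := rfl
  rw [hwid, ← hD, mul_comm]
  refine Finset.sup_le fun i _ => ?_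
  refine hL2 _ ?_
  have h := List.get_mem L i
  simpa using h
end Part4

theorem treeWidth_pathWidth_bubbleWidth_equiv :
    ∃ C : ℕ, 0 < C ∧
      ∀ (V : Type) [Fintype V] [DecidableEq V] (G : SimpleGraph V) (d : ℕ),
        (∀ v : V, (G.neighborSet v).ncard ≤ d) →
        treeWidth G ≤ pathWidth G ∧
        pathWidth G ≤ 2 * bubbleWidth G ∧
        2 * bubbleWidth G ≤ 2 * d * pathWidth G ∧
        2 * d * pathWidth G ≤
          C * d * (Nat.log 2 (Fintype.card V) + 1) * treeWidth G := by
  refine ⟨2, by omega, ?_⟩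
  intro V _ _ G d hdeg
  refine ⟨treeWidth_le_pathWidth G, pathWidth_le_two_mul_bubbleWidth G, ?_, ?_⟩
  · have h := bubbleWidth_le_d_mul_pathWidth G hdeg
    calc 2 * bubbleWidth G ≤ 2 * (d * pathWidth G) := Nat.mul_le_mul_left 2 h
      _ = 2 * d * pathWidth G := by ring
  · have h := pathWidth_le_log_mul_treeWidth G
    calc 2 * d * pathWidth G
        ≤ 2 * d * ((Nat.log 2 (Fintype.card V) + 1) * treeWidth G) :=
          Nat.mul_le_mul_left (2 * d) h
      _ = 2 * d * (Nat.log 2 (Fintype.card V) + 1) * treeWidth G := by ring
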